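/- Let A be a finite category with Möbius inversion with Möbius function μ, and let X : A → Set be a functor with each set Xa finite. Suppose there are natural numbers r(a), one for each object a of A, such that X is isomorphic to the coproduct over objects a of r(a) copies of the representable functor A(a,−). Then for every object a of A, r(a) = ∑_b |Xb| · μ(b,a), where the sum is over objects b of A and |Xb| is the cardinality of the set Xb. -/

import Mathlib

open CategoryTheory

/-- The coproduct, over objects `a` of `A`, of `r a` copies of the
representable functor `A(a, -)`. -/
def famRep {A : Type u} [Category.{v} A] (r : A → ℕ) : A ⥤ Type (max u v) where
  obj b := Σ a : A, Fin (r a) × (a ⟶ b)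
  map f := TypeCat.ofHom fun p => ⟨p.1, p.2.1, p.2.2 ≫ f⟩

open scoped Classical in
/-- **Proposition 1.7** (Leinster). If a finite category `A` has Möbius
inversion `μ` and `X : A ⥤ Set` is a finite functor isomorphic to
`∑_a r(a)·A(a,-)`, then `r(a) = ∑_b |Xb| μ(b,a)`. -/
theorem stmt_4 {A : Type u} [Category.{v} A] [Fintype A]
    [∀ a b : A, Fintype (a ⟶ b)]
    (μ : A → A → ℚ)
    (hμ₁ : ∀ a c : A,
      ∑ b : A, μ a b * (Fintype.card (b ⟶ c) : ℚ) = if a = c then 1 else 0)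
    (hμ₂ : ∀ a c : A,
      ∑ b : A, (Fintype.card (a ⟶ b) : ℚ) * μ b c = if a = c then 1 else 0)
    (X : A ⥤ Type (max u v)) [∀ a : A, Fintype (X.obj a)]
    (r : A → ℕ) (iso : X ≅ famRep r) :
    ∀ a : A, (r a : ℚ) = ∑ b : A, (Fintype.card (X.obj b) : ℚ) * μ b a := by
  intro a
  have key : ∀ b : A, (Fintype.card (X.obj b) : ℚ)
      = ∑ c : A, (r c : ℚ) * (Fintype.card (c ⟶ b) : ℚ) := by
    intro b
    have e : X.obj b ≃ Σ c : A, Fin (r c) × (c ⟶ b) :=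
      (iso.app b).toEquiv
    rw [Fintype.card_congr e]
    rw [Fintype.card_sigma]
    push_cast
    simp [Fintype.card_prod]
  calc (r a : ℚ) = ∑ c : A, (r c : ℚ) * (if c = a then 1 else 0) := by
        simp
    _ = ∑ c : A, (r c : ℚ) * ∑ b : A, (Fintype.card (c ⟶ b) : ℚ) * μ b a := by
        simp [hμ₂]
    _ = ∑ b : A, (∑ c : A, (r c : ℚ) * (Fintype.card (c ⟶ b) : ℚ)) * μ b a := by
        simp only [Finset.mul_sum, Finset.sum_mul, mul_assoc]
        rw [Finset.sum_comm]
    _ = ∑ b : A, (Fintype.card (X.obj b) : ℚ) * μ b a := by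
        simp [key]
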